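/- arXiv:1708.04281 — 2 statements merged into one kernel-verified Lean document; each statement's English description precedes it below -/
import Mathlib

section
/- The exercise region is upward closed in the DC balance: for every t ∈ {0,…,T−1}, if w > K_t and v(t,w) = w − K_t (exercise is optimal at w), then for every h > 0, v(t, w + h) = w + h − K_t (exercise remains optimal at w + h). -/
open MeasureTheory ProbabilityTheory Real

/-- Salary at integer time `t`: `L_t = L₀ · e^{μ_L t}`. -/
noncomputable def salary (L0 μL : ℝ) (t : ℕ) : ℝ := L0 * Real.exp (μL * t)

/-- The ABO `K_t = b · t · L_{t−1} · ä · e^{−r(T−t)}`. -/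
noncomputable def ABO (T : ℕ) (r b aT L0 μL : ℝ) (t : ℕ) : ℝ :=
  b * t * (L0 * Real.exp (μL * ((t : ℝ) - 1))) * aT * Real.exp (-r * ((T : ℝ) - (t : ℝ)))

/-- Auxiliary value function: `bermudanAux n w` is the value at time `t = T − n`
with `n` periods to go, defined by backward induction. -/
noncomputable def bermudanAux (T : ℕ) (r σ μL c b aT L0 : ℝ) : ℕ → ℝ → ℝ
  | 0, w => max (w - ABO T r b aT L0 μL T) 0
  | n + 1, w =>
      max (max (w - ABO T r b aT L0 μL (T - (n + 1))) 0)
        (Real.exp (-r) *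
          ∫ z, bermudanAux T r σ μL c b aT L0 n
              ((w + c * salary L0 μL (T - (n + 1))) * Real.exp (r - σ ^ 2 / 2 + σ * z))
            ∂(gaussianReal 0 1))

/-- The discrete-time value function of the Bermudan DB underpin option:
`v(T,w) = max(w − K_T, 0)` and for `t < T`,
`v(t,w) = max( max(w − K_t, 0), e^{−r} ∫ v(t+1, (w + c·L_t)·e^{r−σ²/2+σz}) γ(dz) )`. -/
noncomputable def bermudanValue (T : ℕ) (r σ μL c b aT L0 : ℝ) (t : ℕ) (w : ℝ) : ℝ :=
  bermudanAux T r σ μL c b aT L0 (T - t) w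

open scoped ENNReal NNReal

lemma gauss_pdf_mul_exp (σ z : ℝ) :
    gaussianPDFReal 0 1 z * Real.exp (σ * z)
      = Real.exp (σ ^ 2 / 2) * gaussianPDFReal σ 1 z := by
  simp only [gaussianPDFReal, NNReal.coe_one, mul_one, sub_zero]
  rw [mul_comm (Real.exp (σ ^ 2 / 2)), mul_assoc, mul_assoc, ← Real.exp_add, ← Real.exp_add]
  ring_nf

lemma gaussianReal_std : gaussianReal 0 1 =
    volume.withDensity (fun z => ((Real.toNNReal (gaussianPDFReal 0 1 z) : ℝ≥0) : ℝ≥0∞)) := by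
  rw [gaussianReal_of_var_ne_zero 0 one_ne_zero]
  rfl

lemma integrable_exp_gauss (σ : ℝ) :
    Integrable (fun z => Real.exp (σ * z)) (gaussianReal 0 1) := by
  rw [gaussianReal_std, integrable_withDensity_iff_integrable_smul
    ((measurable_gaussianPDFReal 0 1).real_toNNReal)]
  have : (fun z => (Real.toNNReal (gaussianPDFReal 0 1 z)) • Real.exp (σ * z))
      = fun z => Real.exp (σ ^ 2 / 2) * gaussianPDFReal σ 1 z := by
    funext z
    rw [NNReal.smul_def, smul_eq_mul, Real.coe_toNNReal _ (gaussianPDFReal_nonneg 0 1 z),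
      gauss_pdf_mul_exp]
  rw [this]
  exact (integrable_gaussianPDFReal σ 1).const_mul _

lemma integral_exp_gauss (σ : ℝ) :
    ∫ z, Real.exp (σ * z) ∂(gaussianReal 0 1) = Real.exp (σ ^ 2 / 2) := by
  rw [gaussianReal_std, integral_withDensity_eq_integral_smul
    ((measurable_gaussianPDFReal 0 1).real_toNNReal)]
  have : (fun z => (Real.toNNReal (gaussianPDFReal 0 1 z)) • Real.exp (σ * z))
      = fun z => Real.exp (σ ^ 2 / 2) * gaussianPDFReal σ 1 z := by
    funext z
    rw [NNReal.smul_def, smul_eq_mul, Real.coe_toNNReal _ (gaussianPDFReal_nonneg 0 1 z),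
      gauss_pdf_mul_exp]
  rw [this, integral_const_mul, integral_gaussianPDFReal_eq_one σ one_ne_zero, mul_one]

lemma lip_of_incr {f : ℝ → ℝ} (H : ∀ x y : ℝ, x ≤ y → f x ≤ f y ∧ f y ≤ f x + (y - x)) :
    LipschitzWith 1 f := by
  apply LipschitzWith.of_dist_le_mul
  intro x y
  rw [Real.dist_eq, Real.dist_eq, NNReal.coe_one, one_mul]
  rcases le_total x y with hxy | hxy
  · obtain ⟨h1, h2⟩ := H x y hxy
    rw [abs_of_nonpos (by linarith : x - y ≤ 0)]
    exact abs_le.mpr ⟨by linarith, by linarith⟩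
  · obtain ⟨h1, h2⟩ := H y x hxy
    rw [abs_of_nonneg (by linarith : 0 ≤ x - y)]
    exact abs_le.mpr ⟨by linarith, by linarith⟩

lemma bermudanAux_nonneg (T : ℕ) (r σ μL c b aT L0 : ℝ) (n : ℕ) (w : ℝ) :
    0 ≤ bermudanAux T r σ μL c b aT L0 n w := by
  cases n with
  | zero => exact le_max_right _ _
  | succ m => exact le_trans (le_max_right _ _) (le_max_left _ _)

lemma bermudanAux_incr (T : ℕ) (r σ μL c b aT L0 : ℝ) (n : ℕ) :
    ∀ x y : ℝ, x ≤ y → bermudanAux T r σ μL c b aT L0 n x ≤ bermudanAux T r σ μL c b aT L0 n y ∧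
      bermudanAux T r σ μL c b aT L0 n y ≤ bermudanAux T r σ μL c b aT L0 n x + (y - x) := by
  induction n with
  | zero =>
    intro x y hxy
    simp only [bermudanAux]
    constructor
    · exact max_le_max (by linarith) le_rfl
    · rcases le_total (y - ABO T r b aT L0 μL T) 0 with h | h
      · rw [max_eq_right h]
        have := le_max_right (x - ABO T r b aT L0 μL T) 0
        linarith
      · rw [max_eq_left h]
        have := le_max_left (x - ABO T r b aT L0 μL T) 0
        linarith
  | succ m ih =>
    -- abbreviations
    set K := ABO T r b aT L0 μL (T - (m + 1)) with hK
    set cL := c * salary L0 μL (T - (m + 1)) with hcL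
    set V := bermudanAux T r σ μL c b aT L0 m with hV
    have Vnonneg : ∀ u, 0 ≤ V u := bermudanAux_nonneg T r σ μL c b aT L0 m
    have Vlip : LipschitzWith 1 V := lip_of_incr ih
    have Vcont : Continuous V := Vlip.continuous
    -- integrability of the inner function for any starting wealth a
    have hInt : ∀ a : ℝ, Integrable
        (fun z => V ((a + cL) * Real.exp (r - σ ^ 2 / 2 + σ * z))) (gaussianReal 0 1) := by
      intro a
      have hmeas : AEStronglyMeasurable
          (fun z => V ((a + cL) * Real.exp (r - σ ^ 2 / 2 + σ * z))) (gaussianReal 0 1) := by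
        exact (Vcont.comp ((continuous_const.mul
          ((continuous_const.add (continuous_const.mul continuous_id)).rexp)))).aestronglyMeasurable
      have hbound : Integrable
          (fun z => V 0 + |a + cL| * Real.exp (r - σ ^ 2 / 2) * Real.exp (σ * z))
          (gaussianReal 0 1) := by
        exact (integrable_const (V 0)).add (((integrable_exp_gauss σ).const_mul _))
      refine hbound.mono hmeas (Filter.Eventually.of_forall fun z => ?_)
      have h1 : |V ((a + cL) * Real.exp (r - σ ^ 2 / 2 + σ * z)) - V 0|
          ≤ |(a + cL) * Real.exp (r - σ ^ 2 / 2 + σ * z) - 0| := by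
        have := Vlip.dist_le_mul ((a + cL) * Real.exp (r - σ ^ 2 / 2 + σ * z)) 0
        rwa [Real.dist_eq, Real.dist_eq, NNReal.coe_one, one_mul] at this
      rw [sub_zero, abs_mul, abs_exp, Real.exp_add] at h1
      have h2 : 0 ≤ V 0 + |a + cL| * Real.exp (r - σ ^ 2 / 2) * Real.exp (σ * z) :=
        add_nonneg (Vnonneg 0) (by positivity)
      rw [Real.norm_eq_abs, Real.norm_eq_abs, abs_of_nonneg (Vnonneg _), abs_of_nonneg h2]
      have h3 := (abs_le.mp h1).2
      have h4 : (a + cL) * Real.exp (r - σ ^ 2 / 2 + σ * z)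
          = (a + cL) * (Real.exp (r - σ ^ 2 / 2) * Real.exp (σ * z)) := by
        rw [Real.exp_add]
      rw [h4]
      have h5 := mul_assoc |a + cL| (Real.exp (r - σ ^ 2 / 2)) (Real.exp (σ * z))
      linarith
    intro x y hxy
    simp only [bermudanAux, ← hK, ← hcL, ← hV]
    have hptmono : ∀ z : ℝ, V ((x + cL) * Real.exp (r - σ ^ 2 / 2 + σ * z))
        ≤ V ((y + cL) * Real.exp (r - σ ^ 2 / 2 + σ * z)) := by
      intro z
      exact (ih _ _ (by nlinarith [Real.exp_pos (r - σ ^ 2 / 2 + σ * z)])).1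
    set g2 : ℝ → ℝ := fun z => ((y - x) * Real.exp (r - σ ^ 2 / 2)) * Real.exp (σ * z) with hg2def
    have hg2 : Integrable g2 (gaussianReal 0 1) := (integrable_exp_gauss σ).const_mul _
    have hptlip : ∀ z : ℝ, V ((y + cL) * Real.exp (r - σ ^ 2 / 2 + σ * z))
        ≤ V ((x + cL) * Real.exp (r - σ ^ 2 / 2 + σ * z)) + g2 z := by
      intro z
      have hle : (x + cL) * Real.exp (r - σ ^ 2 / 2 + σ * z)
          ≤ (y + cL) * Real.exp (r - σ ^ 2 / 2 + σ * z) := by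
        nlinarith [Real.exp_pos (r - σ ^ 2 / 2 + σ * z)]
      have h2 := (ih _ _ hle).2
      have hexp : (y + cL) * Real.exp (r - σ ^ 2 / 2 + σ * z)
          - (x + cL) * Real.exp (r - σ ^ 2 / 2 + σ * z) = g2 z := by
        rw [hg2def, Real.exp_add]; ring
      linarith [hexp]
    constructor
    · apply max_le_max (max_le_max (by linarith) le_rfl)
      apply mul_le_mul_of_nonneg_left _ (le_of_lt (Real.exp_pos (-r)))
      exact integral_mono (hInt x) (hInt y) hptmono
    · -- upper bound
      have hIy : ∫ z, V ((y + cL) * Real.exp (r - σ ^ 2 / 2 + σ * z)) ∂(gaussianReal 0 1)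
          ≤ (∫ z, V ((x + cL) * Real.exp (r - σ ^ 2 / 2 + σ * z)) ∂(gaussianReal 0 1))
            + ((y - x) * Real.exp (r - σ ^ 2 / 2)) * Real.exp (σ ^ 2 / 2) := by
        have hm := integral_mono (hInt y) ((hInt x).add hg2)
          (fun z => by simpa using hptlip z)
        simp only [Pi.add_apply] at hm
        rw [integral_add (hInt x) hg2] at hm
        simp only [hg2def] at hm
        rw [integral_const_mul, integral_exp_gauss σ] at hm
        exact hm
      have hprod : Real.exp (-r) * (Real.exp (r - σ ^ 2 / 2) * Real.exp (σ ^ 2 / 2)) = 1 := by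
        rw [← Real.exp_add, ← Real.exp_add]; norm_num
      have hcont : Real.exp (-r) *
          (∫ z, V ((y + cL) * Real.exp (r - σ ^ 2 / 2 + σ * z)) ∂(gaussianReal 0 1))
          ≤ Real.exp (-r) *
          (∫ z, V ((x + cL) * Real.exp (r - σ ^ 2 / 2 + σ * z)) ∂(gaussianReal 0 1)) + (y - x) := by
        have h1 := mul_le_mul_of_nonneg_left hIy (le_of_lt (Real.exp_pos (-r)))
        rw [mul_add] at h1
        nlinarith [Real.exp_pos (-r)]
      have hex : max (y - K) 0 ≤ max (x - K) 0 + (y - x) := by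
        rcases le_total (y - K) 0 with h | h
        · rw [max_eq_right h]; have := le_max_right (x - K) 0; linarith
        · rw [max_eq_left h]; have := le_max_left (x - K) 0; linarith
      apply max_le
      · exact le_trans hex (by
          have := le_max_left (max (x - K) 0) (Real.exp (-r) *
            ∫ z, V ((x + cL) * Real.exp (r - σ ^ 2 / 2 + σ * z)) ∂(gaussianReal 0 1))
          linarith)
      · exact le_trans hcont (by
          have := le_max_right (max (x - K) 0) (Real.exp (-r) *
            ∫ z, V ((x + cL) * Real.exp (r - σ ^ 2 / 2 + σ * z)) ∂(gaussianReal 0 1))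
          linarith)

/-- The exercise region is upward closed in the DC balance: for `t ∈ {0,…,T−1}`,
if `w > K_t` and `v(t,w) = w − K_t`, then for every `h > 0`,
`v(t, w+h) = w + h − K_t`. -/
theorem bermudanValue_exercise_upward_closed (T : ℕ) (hT : 1 ≤ T) (r σ μL c b aT L0 : ℝ)
    (hr : 0 ≤ r) (hσ : 0 < σ) (hμL : 0 ≤ μL) (hc : 0 < c) (hb : 0 < b)
    (haT : 0 < aT) (hL0 : 0 < L0) (t : ℕ) (ht : t < T) (w : ℝ)
    (hw : ABO T r b aT L0 μL t < w)
    (hex : bermudanValue T r σ μL c b aT L0 t w = w - ABO T r b aT L0 μL t)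
    (h : ℝ) (hh : 0 < h) :
    bermudanValue T r σ μL c b aT L0 t (w + h) = w + h - ABO T r b aT L0 μL t := by
  obtain ⟨n, hn⟩ : ∃ n, T - t = n + 1 := ⟨T - t - 1, by omega⟩
  have htn : T - (n + 1) = t := by omega
  unfold bermudanValue at hex ⊢
  rw [hn] at hex ⊢
  have hincr := (bermudanAux_incr T r σ μL c b aT L0 (n + 1) w (w + h) (by linarith)).2
  have hlow : w + h - ABO T r b aT L0 μL t
      ≤ bermudanAux T r σ μL c b aT L0 (n + 1) (w + h) := by
    simp only [bermudanAux]
    rw [htn]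
    exact le_trans (le_max_left _ 0) (le_max_left _ _)
  rw [hex] at hincr
  linarith
end

section
/- The one-period dynamic-programming operator preserves monotonicity, convexity and the Lipschitz bound: let r ∈ ℝ, σ > 0, a ≥ 0, and let g : [0,∞) → ℝ be Borel measurable with |g(x)| ≤ C·(1 + x) for some constant C. Define (Tg)(w) = e^{−r} ∫_ℝ g( (w + a)·e^{r − σ²/2 + σ z} ) γ(dz) for w ∈ [0,∞). Then: (i) if g is nondecreasing then Tg is nondecreasing; (ii) if g is convex then Tg is convex; (iii) if |g(x) − g(y)| ≤ |x − y| for all x, y ≥ 0, then |(Tg)(x) − (Tg)(y)| ≤ |x − y| for all x, y ≥ 0. -/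
open MeasureTheory ProbabilityTheory Real
open scoped ENNReal NNReal

lemma gauss_pdf_mul (t x : ℝ) :
    gaussianPDFReal 0 1 x * Real.exp (t * x)
      = Real.exp (t ^ 2 / 2) * gaussianPDFReal t 1 x := by
  simp only [gaussianPDFReal, NNReal.coe_one, mul_one, sub_zero]
  rw [mul_assoc, mul_comm (Real.exp (t^2/2)), mul_assoc, ← Real.exp_add, ← Real.exp_add]
  ring_nf

lemma gauss_integrable_iff (f : ℝ → ℝ) :
    Integrable f (gaussianReal 0 1) ↔
      Integrable (fun x => gaussianPDFReal 0 1 x * f x) volume := by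
  rw [gaussianReal_of_var_ne_zero 0 one_ne_zero,
    integrable_withDensity_iff (measurable_gaussianPDF 0 1)
      (ae_of_all _ fun x => ENNReal.ofReal_lt_top)]
  refine integrable_congr (ae_of_all _ fun x => ?_)
  simp [gaussianPDF, ENNReal.toReal_ofReal (gaussianPDFReal_nonneg 0 1 x), mul_comm]

lemma gauss_integral_eq (f : ℝ → ℝ) :
    (∫ z, f z ∂(gaussianReal 0 1)) = ∫ x, gaussianPDFReal 0 1 x * f x := by
  rw [gaussianReal_of_var_ne_zero 0 one_ne_zero]
  have h1 : (volume.withDensity (gaussianPDF 0 1))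
      = volume.withDensity (fun x => ((gaussianPDFReal 0 1 x).toNNReal : ℝ≥0∞)) := rfl
  rw [h1, integral_withDensity_eq_integral_smul
    (by exact (measurable_gaussianPDFReal 0 1).real_toNNReal) f]
  refine integral_congr_ae (ae_of_all _ fun x => ?_)
  simp [NNReal.smul_def, Real.coe_toNNReal _ (gaussianPDFReal_nonneg 0 1 x)]

lemma gauss_exp_integrable (t : ℝ) :
    Integrable (fun z => Real.exp (t * z)) (gaussianReal 0 1) := by
  rw [gauss_integrable_iff]
  have : (fun x => gaussianPDFReal 0 1 x * Real.exp (t * x))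
      = fun x => Real.exp (t ^ 2 / 2) * gaussianPDFReal t 1 x := funext (gauss_pdf_mul t)
  rw [this]
  exact (integrable_gaussianPDFReal t 1).const_mul _

lemma gauss_exp_integral (t : ℝ) :
    (∫ z, Real.exp (t * z) ∂(gaussianReal 0 1)) = Real.exp (t ^ 2 / 2) := by
  rw [gauss_integral_eq]
  simp_rw [gauss_pdf_mul t]
  rw [integral_const_mul, integral_gaussianPDFReal_eq_one t one_ne_zero, mul_one]


/-- The one-period dynamic-programming operator
`(Tg)(w) = e^{−r} ∫ g((w + a)·e^{r−σ²/2+σz}) γ(dz)` (with `γ` the standard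
Gaussian measure) preserves monotonicity, convexity and the 1-Lipschitz bound:
for Borel measurable `g` with linear growth `|g(x)| ≤ C·(1 + x)` on `[0,∞)`,
(i) if `g` is nondecreasing on `[0,∞)` then so is `Tg`;
(ii) if `g` is convex on `[0,∞)` then so is `Tg`;
(iii) if `g` is 1-Lipschitz on `[0,∞)` then so is `Tg`. -/
theorem dp_operator_preserves_properties (r σ a : ℝ) (hσ : 0 < σ) (ha : 0 ≤ a)
    (g : ℝ → ℝ) (hg_meas : Measurable g) (C : ℝ)
    (hgrowth : ∀ x : ℝ, 0 ≤ x → |g x| ≤ C * (1 + x)) :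
    ((∀ x y : ℝ, 0 ≤ x → x ≤ y → g x ≤ g y) →
      ∀ x y : ℝ, 0 ≤ x → x ≤ y →
        Real.exp (-r) *
            ∫ z, g ((x + a) * Real.exp (r - σ ^ 2 / 2 + σ * z)) ∂(gaussianReal 0 1) ≤
          Real.exp (-r) *
            ∫ z, g ((y + a) * Real.exp (r - σ ^ 2 / 2 + σ * z)) ∂(gaussianReal 0 1)) ∧
    (ConvexOn ℝ (Set.Ici (0 : ℝ)) g →
      ConvexOn ℝ (Set.Ici (0 : ℝ)) (fun w =>
        Real.exp (-r) *
          ∫ z, g ((w + a) * Real.exp (r - σ ^ 2 / 2 + σ * z)) ∂(gaussianReal 0 1))) ∧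
    ((∀ x y : ℝ, 0 ≤ x → 0 ≤ y → |g x - g y| ≤ |x - y|) →
      ∀ x y : ℝ, 0 ≤ x → 0 ≤ y →
        |Real.exp (-r) *
            ∫ z, g ((x + a) * Real.exp (r - σ ^ 2 / 2 + σ * z)) ∂(gaussianReal 0 1)
          - Real.exp (-r) *
            ∫ z, g ((y + a) * Real.exp (r - σ ^ 2 / 2 + σ * z)) ∂(gaussianReal 0 1)|
          ≤ |x - y|) := by
  set γ := gaussianReal 0 1
  set E : ℝ → ℝ := fun z => Real.exp (r - σ ^ 2 / 2 + σ * z) with hE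
  have hEm : Measurable E := ((measurable_id.const_mul σ).const_add (r - σ ^ 2 / 2)).exp
  have hEpos : ∀ z, 0 < E z := fun z => Real.exp_pos _
  have hE_int : Integrable E γ := by
    have : E = fun z => Real.exp (r - σ ^ 2 / 2) * Real.exp (σ * z) :=
      funext fun z => Real.exp_add _ _
    rw [this]
    exact (gauss_exp_integrable σ).const_mul _
  have hE_integral : (∫ z, E z ∂γ) = Real.exp r := by
    have h2 : E = fun z => Real.exp (r - σ ^ 2 / 2) * Real.exp (σ * z) :=
      funext fun z => Real.exp_add _ _
    rw [h2, integral_const_mul, gauss_exp_integral σ, ← Real.exp_add]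
    norm_num
  have hC : 0 ≤ C := le_trans (abs_nonneg (g 0)) (by simpa using hgrowth 0 le_rfl)
  have hmeas : ∀ c : ℝ, AEStronglyMeasurable (fun z => g (c * E z)) γ := by
    intro c
    exact (hg_meas.comp (hEm.const_mul c)).aestronglyMeasurable
  have h_int : ∀ c : ℝ, 0 ≤ c → Integrable (fun z => g (c * E z)) γ := by
    intro c hc
    have hbd : Integrable (fun z => C * (1 + c * E z)) γ :=
      (((integrable_const (1 : ℝ)).add (hE_int.const_mul c)).const_mul C)
    refine hbd.mono' (hmeas c) (ae_of_all _ fun z => ?_)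
    have h0 : 0 ≤ c * E z := mul_nonneg hc (hEpos z).le
    simpa [Real.norm_eq_abs] using hgrowth (c * E z) h0
  refine ⟨?_, ?_, ?_⟩
  · -- monotonicity
    intro hmono x y hx hxy
    have hI := integral_mono (h_int (x + a) (by linarith)) (h_int (y + a) (by linarith))
      (fun z => hmono _ _ (mul_nonneg (by linarith) (hEpos z).le)
        (mul_le_mul_of_nonneg_right (by linarith) (hEpos z).le))
    exact mul_le_mul_of_nonneg_left hI (Real.exp_nonneg _)
  · -- convexity
    intro hconv
    refine ⟨convex_Ici 0, fun x hx y hy p q hp hq hpq => ?_⟩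
    simp only [smul_eq_mul]
    have hx0 : (0 : ℝ) ≤ x := hx
    have hy0 : (0 : ℝ) ≤ y := hy
    have hw0 : 0 ≤ p * x + q * y := by positivity
    have h1 := h_int (x + a) (by linarith)
    have h2 := h_int (y + a) (by linarith)
    have h3 := h_int (p * x + q * y + a) (by linarith)
    have step : ∀ z, g ((p * x + q * y + a) * E z)
        ≤ p * g ((x + a) * E z) + q * g ((y + a) * E z) := by
      intro z
      have harg : (p * x + q * y + a) * E z
          = p * ((x + a) * E z) + q * ((y + a) * E z) := by
        have h : p * x + q * y + a = p * (x + a) + q * (y + a) := by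
          linear_combination (-a) * hpq
        rw [h]; ring
      rw [harg]
      exact hconv.2 (Set.mem_Ici.2 (mul_nonneg (by linarith) (hEpos z).le))
        (Set.mem_Ici.2 (mul_nonneg (by linarith) (hEpos z).le)) hp hq hpq
    have key := integral_mono h3 ((h1.const_mul p).add (h2.const_mul q)) step
    simp only [Pi.add_apply] at key
    rw [integral_add (h1.const_mul p) (h2.const_mul q), integral_const_mul,
      integral_const_mul] at key
    calc Real.exp (-r) * ∫ z, g ((p * x + q * y + a) * E z) ∂γ
        ≤ Real.exp (-r) * (p * (∫ z, g ((x + a) * E z) ∂γ)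
            + q * (∫ z, g ((y + a) * E z) ∂γ)) :=
          mul_le_mul_of_nonneg_left key (Real.exp_nonneg _)
      _ = p * (Real.exp (-r) * ∫ z, g ((x + a) * E z) ∂γ)
            + q * (Real.exp (-r) * ∫ z, g ((y + a) * E z) ∂γ) := by ring
  · -- Lipschitz
    intro hlip x y hx hy
    have h1 := h_int (x + a) (by linarith)
    have h2 := h_int (y + a) (by linarith)
    have key : |(∫ z, g ((x + a) * E z) ∂γ) - ∫ z, g ((y + a) * E z) ∂γ|
        ≤ |x - y| * Real.exp r := by
      rw [← integral_sub h1 h2]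
      calc |∫ z, (g ((x + a) * E z) - g ((y + a) * E z)) ∂γ|
          ≤ ∫ z, |g ((x + a) * E z) - g ((y + a) * E z)| ∂γ :=
            by simpa [Real.norm_eq_abs] using
              norm_integral_le_integral_norm
                (fun z => g ((x + a) * E z) - g ((y + a) * E z)) (μ := γ)
        _ ≤ ∫ z, |x - y| * E z ∂γ := by
            refine integral_mono (h1.sub h2).abs (hE_int.const_mul _) fun z => ?_
            have := hlip ((x + a) * E z) ((y + a) * E z)
              (mul_nonneg (by linarith) (hEpos z).le)
              (mul_nonneg (by linarith) (hEpos z).le)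
            calc |g ((x + a) * E z) - g ((y + a) * E z)|
                ≤ |(x + a) * E z - (y + a) * E z| := this
              _ = |x - y| * E z := by
                  rw [← sub_mul, abs_mul, abs_of_pos (hEpos z)]
                  congr 2
                  ring
        _ = |x - y| * Real.exp r := by rw [integral_const_mul, hE_integral]
    rw [← mul_sub, abs_mul, Real.abs_exp]
    calc Real.exp (-r) * |(∫ z, g ((x + a) * E z) ∂γ) - ∫ z, g ((y + a) * E z) ∂γ|
        ≤ Real.exp (-r) * (|x - y| * Real.exp r) :=
          mul_le_mul_of_nonneg_left key (Real.exp_nonneg _)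
      _ = |x - y| * (Real.exp (-r) * Real.exp r) := by ring
      _ = |x - y| := by rw [← Real.exp_add, neg_add_cancel, Real.exp_zero, mul_one]
end
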